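/- Let q ≥ 3, 0 ≤ i ≤ j ≤ n with n ≥ i+j, and let f: Σ_q^n → ℝ be a nonzero function in U_{[i,j]}(n,q). Then the support of f has cardinality at least 2^i (q-1)^i q^{n-i-j}. -/

import Mathlib

/-- Sum of `f` over the neighbors of `x` in the Hamming graph `H(n,q)`. -/
noncomputable def adjSum (n q : ℕ) (f : (Fin n → Fin q) → ℝ) (x : Fin n → Fin q) : ℝ :=
  ∑ y : Fin n → Fin q, if hammingDist x y = 1 then f y else 0

/-- `f` satisfies the eigenfunction equation for eigenvalue `lam` on `H(n,q)`. -/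
def IsEigenfun (n q : ℕ) (lam : ℝ) (f : (Fin n → Fin q) → ℝ) : Prop :=
  ∀ x, adjSum n q f x = lam * f x

/-- `f ∈ U_i(n,q)`, the eigenspace for eigenvalue `n(q-1) - q i`. -/
def memU (n q i : ℕ) (f : (Fin n → Fin q) → ℝ) : Prop :=
  IsEigenfun n q ((n : ℝ) * ((q : ℝ) - 1) - (q : ℝ) * (i : ℝ)) f

/-- `f ∈ U_{[i,j]}(n,q) = U_i ⊕ ⋯ ⊕ U_j`. -/
def memUI (n q i j : ℕ) (f : (Fin n → Fin q) → ℝ) : Prop :=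
  ∃ g : ℕ → (Fin n → Fin q) → ℝ,
    (∀ t ∈ Finset.Icc i j, memU n q t (g t)) ∧ f = ∑ t ∈ Finset.Icc i j, g t

/-- The cardinality of the support of `f : Σ_q^n → ℝ`. -/
noncomputable def suppCard (n q : ℕ) (f : (Fin n → Fin q) → ℝ) : ℕ :=
  Nat.card {x : Fin n → Fin q // f x ≠ 0}

namespace MinSupp

open Finset

/-! ### Basic linearity of adjSum -/

theorem adjSum_add (n q : ℕ) (f g : (Fin n → Fin q) → ℝ) (x : Fin n → Fin q) :
    adjSum n q (fun y => f y + g y) x = adjSum n q f x + adjSum n q g x := by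
  unfold adjSum
  rw [← Finset.sum_add_distrib]
  apply Finset.sum_congr rfl
  intro y _
  split <;> simp

theorem adjSum_smul (n q : ℕ) (c : ℝ) (f : (Fin n → Fin q) → ℝ) (x : Fin n → Fin q) :
    adjSum n q (fun y => c * f y) x = c * adjSum n q f x := by
  unfold adjSum
  rw [Finset.mul_sum]
  apply Finset.sum_congr rfl
  intro y _
  split <;> simp

theorem adjSum_sub (n q : ℕ) (f g : (Fin n → Fin q) → ℝ) (x : Fin n → Fin q) :
    adjSum n q (fun y => f y - g y) x = adjSum n q f x - adjSum n q g x := by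
  unfold adjSum
  rw [← Finset.sum_sub_distrib]
  apply Finset.sum_congr rfl
  intro y _
  split <;> simp

theorem adjSum_congr (n q : ℕ) (f g : (Fin n → Fin q) → ℝ) (h : ∀ y, f y = g y)
    (x : Fin n → Fin q) : adjSum n q f x = adjSum n q g x := by
  unfold adjSum
  exact Finset.sum_congr rfl fun y _ => by rw [h y]

theorem adjSum_sum (n q : ℕ) {ι : Type*} (F : Finset ι) (g : ι → (Fin n → Fin q) → ℝ)
    (x : Fin n → Fin q) :
    adjSum n q (fun y => ∑ t ∈ F, g t y) x = ∑ t ∈ F, adjSum n q (g t) x := by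
  classical
  induction F using Finset.induction_on with
  | empty =>
      simp only [Finset.sum_empty]
      unfold adjSum; simp
  | insert _ _ hne ih =>
      rw [Finset.sum_insert hne, ← ih, ← adjSum_add]
      apply adjSum_congr
      intro y
      rw [Finset.sum_insert hne]

/-! ### memU closure -/

theorem memU_zero (n q t : ℕ) : memU n q t (fun _ => 0) := by
  intro x
  unfold adjSum
  simp

theorem memU_add {n q t : ℕ} {f g : (Fin n → Fin q) → ℝ} (hf : memU n q t f)
    (hg : memU n q t g) : memU n q t (fun y => f y + g y) := by
  intro x
  rw [adjSum_add, hf x, hg x]; ring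

theorem memU_sub {n q t : ℕ} {f g : (Fin n → Fin q) → ℝ} (hf : memU n q t f)
    (hg : memU n q t g) : memU n q t (fun y => f y - g y) := by
  intro x
  rw [adjSum_sub, hf x, hg x]; ring

theorem memU_smul {n q t : ℕ} (c : ℝ) {f : (Fin n → Fin q) → ℝ} (hf : memU n q t f) :
    memU n q t (fun y => c * f y) := by
  intro x
  rw [adjSum_smul, hf x]; ring

theorem memU_congr {n q t : ℕ} {f g : (Fin n → Fin q) → ℝ} (h : ∀ y, f y = g y)
    (hf : memU n q t f) : memU n q t g := by
  intro x
  rw [← adjSum_congr n q f g h, hf x, h x]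

theorem memU_sum {n q t : ℕ} {ι : Type*} (F : Finset ι) (g : ι → (Fin n → Fin q) → ℝ)
    (hg : ∀ s ∈ F, memU n q t (g s)) : memU n q t (fun y => ∑ s ∈ F, g s y) := by
  intro x
  rw [adjSum_sum]
  rw [Finset.sum_congr rfl fun s hs => (hg s hs) x, ← Finset.mul_sum]

/-! ### Restriction along the first coordinate -/

def res (n q : ℕ) (f : (Fin (n+1) → Fin q) → ℝ) (k : Fin q) : (Fin n → Fin q) → ℝ :=
  fun y => f (Fin.cons k y)

def Ssum (n q : ℕ) (f : (Fin (n+1) → Fin q) → ℝ) : (Fin n → Fin q) → ℝ :=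
  fun y => ∑ k : Fin q, res n q f k y

theorem hammingDist_cons (n q : ℕ) (a b : Fin q) (y z : Fin n → Fin q) :
    hammingDist (Fin.cons a y : Fin (n+1) → Fin q) (Fin.cons b z) =
      (if a = b then 0 else 1) + hammingDist y z := by
  have hd : ∀ (m : ℕ) (u v : Fin m → Fin q),
      hammingDist u v = ∑ i : Fin m, if u i ≠ v i then 1 else 0 := by
    intro m u v
    rw [show hammingDist u v = (Finset.univ.filter fun i => u i ≠ v i).card from rfl,
      Finset.card_filter]
  rw [hd, hd, Fin.sum_univ_succ]
  simp only [Fin.cons_zero, Fin.cons_succ]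
  by_cases h : a = b <;> simp [h]

theorem sum_cube_succ {M : Type*} [AddCommMonoid M] (n q : ℕ)
    (F : (Fin (n+1) → Fin q) → M) :
    ∑ x : Fin (n+1) → Fin q, F x = ∑ k : Fin q, ∑ y : Fin n → Fin q, F (Fin.cons k y) := by
  have := Fintype.sum_equiv (Fin.consEquiv (fun _ : Fin (n+1) => Fin q))
    (fun p => F (Fin.cons p.1 p.2)) F (fun p => rfl)
  rw [← this, Fintype.sum_prod_type]

theorem adjSum_cons (n q : ℕ) (f : (Fin (n+1) → Fin q) → ℝ) (k : Fin q)
    (y : Fin n → Fin q) :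
    adjSum (n+1) q f (Fin.cons k y) =
      adjSum n q (res n q f k) y + (Ssum n q f y - res n q f k y) := by
  unfold adjSum
  rw [sum_cube_succ n q]
  have key : ∀ m : Fin q, (∑ z : Fin n → Fin q,
      if hammingDist (Fin.cons k y : Fin (n+1) → Fin q) (Fin.cons m z) = 1
        then f (Fin.cons m z) else 0)
      = if m = k then adjSum n q (res n q f k) y else res n q f m y := by
    intro m
    by_cases hmk : m = k
    · subst hmk
      rw [if_pos rfl]
      unfold adjSum
      apply Finset.sum_congr rfl
      intro z _
      rw [hammingDist_cons, if_pos rfl]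
      simp only [zero_add]
      rfl
    · rw [if_neg hmk]
      have h2 : ∀ z : Fin n → Fin q,
          (if hammingDist (Fin.cons k y : Fin (n+1) → Fin q) (Fin.cons m z) = 1
            then f (Fin.cons m z) else 0)
          = if z = y then f (Fin.cons m z) else 0 := by
        intro z
        rw [hammingDist_cons, if_neg (show ¬ (k = m) from fun h => hmk h.symm)]
        by_cases hzy : z = y
        · subst hzy
          simp
        · rw [if_neg hzy, if_neg]
          intro hc
          have h0 : hammingDist y z = 0 := by omega
          exact hzy (hammingDist_eq_zero.mp h0).symm
      rw [Finset.sum_congr rfl fun z _ => h2 z,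
        Finset.sum_ite_eq' Finset.univ y (fun z => f (Fin.cons m z)),
        if_pos (Finset.mem_univ y)]
      rfl
  rw [Finset.sum_congr rfl fun m _ => key m]
  have split : ∀ m : Fin q, (if m = k then adjSum n q (res n q f k) y else res n q f m y)
      = (if m = k then adjSum n q (res n q f k) y - res n q f m y else 0) + res n q f m y := by
    intro m
    by_cases hmk : m = k
    · subst hmk; simp
    · simp [hmk]
  rw [Finset.sum_congr rfl fun m _ => split m, Finset.sum_add_distrib,
    Finset.sum_ite_eq' Finset.univ k
      (fun m => adjSum n q (res n q f k) y - res n q f m y),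
    if_pos (Finset.mem_univ k)]
  unfold Ssum
  have hfold : (∑ x : Fin n → Fin q, if hammingDist y x = 1 then res n q f k x else 0)
      = adjSum n q (res n q f k) y := rfl
  rw [hfold]
  ring

/-! ### Eigen lemmas for restrictions -/

theorem adjSum_res {n q t : ℕ} {f : (Fin (n+1) → Fin q) → ℝ} (h : memU (n+1) q t f)
    (k : Fin q) (y : Fin n → Fin q) :
    adjSum n q (res n q f k) y =
      ((((n:ℝ)+1) * ((q:ℝ)-1) - (q:ℝ)*(t:ℝ)) + 1) * res n q f k y - Ssum n q f y := by
  have h1 := h (Fin.cons k y)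
  rw [adjSum_cons] at h1
  have h2 : f (Fin.cons k y) = res n q f k y := rfl
  rw [h2] at h1
  push_cast at h1
  linarith

theorem memU_S {n q t : ℕ} {f : (Fin (n+1) → Fin q) → ℝ} (h : memU (n+1) q t f) :
    memU n q t (Ssum n q f) := by
  intro y
  have h1 : adjSum n q (Ssum n q f) y = ∑ k : Fin q, adjSum n q (res n q f k) y :=
    adjSum_sum n q Finset.univ (fun k => res n q f k) y
  rw [h1, Finset.sum_congr rfl fun k _ => adjSum_res h k y, Finset.sum_sub_distrib,
    ← Finset.mul_sum, Finset.sum_const, Finset.card_univ, Fintype.card_fin, nsmul_eq_mul]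
  have hfold : (∑ x : Fin q, res n q f x y) = Ssum n q f y := rfl
  rw [hfold]
  push_cast
  ring

theorem memU_D {n q t : ℕ} {f : (Fin (n+1) → Fin q) → ℝ} (h : memU (n+1) q t f)
    (ht : 1 ≤ t) (a b : Fin q) :
    memU n q (t-1) (fun y => res n q f a y - res n q f b y) := by
  intro y
  rw [adjSum_sub, adjSum_res h a y, adjSum_res h b y]
  have hc : ((t - 1 : ℕ) : ℝ) = (t:ℝ) - 1 := by
    rw [Nat.cast_sub ht]; norm_num
  rw [hc]
  push_cast
  ring

theorem adjSum_one (n q : ℕ) (x : Fin n → Fin q) :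
    adjSum n q (fun _ => 1) x = (n:ℝ) * ((q:ℝ)-1) := by
  induction n with
  | zero =>
      unfold adjSum
      rw [Finset.sum_eq_zero]
      · simp
      · intro y _
        have hyx : y = x := funext fun i => i.elim0
        subst hyx
        rw [hammingDist_self]
        simp
  | succ n ih =>
      have hres : res n q (fun _ => (1:ℝ)) (x 0) = fun _ => (1:ℝ) := rfl
      conv_lhs => rw [← Fin.cons_self_tail x]
      rw [adjSum_cons, hres, ih]
      have hS : Ssum n q (fun _ => (1:ℝ)) (Fin.tail x) = (q:ℝ) := by
        unfold Ssum res
        rw [Finset.sum_const, Finset.card_univ, Fintype.card_fin]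
        simp
      rw [hS]
      show (n:ℝ) * ((q:ℝ)-1) + ((q:ℝ) - 1) = _
      push_cast
      ring

theorem eigen_zero_of_large {n q : ℕ} (hq : 0 < q) {μ : ℝ} {g : (Fin n → Fin q) → ℝ}
    (hg : ∀ x, adjSum n q g x = μ * g x) (hμ : (n:ℝ) * ((q:ℝ)-1) < |μ|) :
    ∀ x, g x = 0 := by
  have hne : Nonempty (Fin n → Fin q) := ⟨fun _ => ⟨0, hq⟩⟩
  obtain ⟨x₀, -, hmax⟩ := Finset.exists_max_image Finset.univ (fun x => |g x|)
    ⟨Classical.arbitrary _, Finset.mem_univ _⟩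
  have hmax' : ∀ x, |g x| ≤ |g x₀| := fun x => hmax x (Finset.mem_univ x)
  by_cases hM : |g x₀| = 0
  · intro x
    have := hmax' x
    have : |g x| ≤ 0 := by rw [hM] at this; exact this
    exact abs_eq_zero.mp (le_antisymm this (abs_nonneg _))
  · exfalso
    have hMpos : 0 < |g x₀| := lt_of_le_of_ne (abs_nonneg _) (Ne.symm hM)
    have key : |μ| * |g x₀| ≤ (n:ℝ) * ((q:ℝ)-1) * |g x₀| := by
      have e1 : |μ| * |g x₀| = |adjSum n q g x₀| := by rw [hg x₀, abs_mul]
      rw [e1]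
      unfold adjSum
      calc |∑ y : Fin n → Fin q, if hammingDist x₀ y = 1 then g y else 0|
          ≤ ∑ y : Fin n → Fin q, |if hammingDist x₀ y = 1 then g y else 0| :=
            Finset.abs_sum_le_sum_abs _ _
        _ ≤ ∑ y : Fin n → Fin q, (if hammingDist x₀ y = 1 then |g x₀| else 0) := by
            apply Finset.sum_le_sum
            intro y _
            split
            · exact hmax' y
            · simp
        _ = (n:ℝ) * ((q:ℝ)-1) * |g x₀| := by
            have : ∀ y : Fin n → Fin q, (if hammingDist x₀ y = 1 then |g x₀| else 0)
                = |g x₀| * (if hammingDist x₀ y = 1 then (1:ℝ) else 0) := by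
              intro y; split <;> simp
            rw [Finset.sum_congr rfl fun y _ => this y, ← Finset.mul_sum]
            have : (∑ y : Fin n → Fin q, if hammingDist x₀ y = 1 then (1:ℝ) else 0)
                = adjSum n q (fun _ => 1) x₀ := rfl
            rw [this, adjSum_one]
            ring
    have := le_of_mul_le_mul_right key hMpos
    linarith

theorem memU_D0 {n q : ℕ} (hq : 0 < q) {f : (Fin (n+1) → Fin q) → ℝ}
    (h : memU (n+1) q 0 f) (a b : Fin q) : res n q f a = res n q f b := by
  have hD : ∀ y, adjSum n q (fun y => res n q f a y - res n q f b y) y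
      = ((((n:ℝ)+1) * ((q:ℝ)-1) + 1)) * (res n q f a y - res n q f b y) := by
    intro y
    rw [adjSum_sub, adjSum_res h a y, adjSum_res h b y]
    push_cast
    ring
  have hq1 : (1:ℝ) ≤ (q:ℝ) := by exact_mod_cast hq
  have habs : (n:ℝ) * ((q:ℝ)-1) < |(((n:ℝ)+1) * ((q:ℝ)-1) + 1)| := by
    rw [abs_of_pos (by nlinarith)]
    nlinarith
  have := eigen_zero_of_large hq hD habs
  funext y
  have hy := this y
  linarith

/-! ### Independence of eigenspaces -/

theorem indep_eigen {n q : ℕ} (hq : 0 < q) (F : Finset ℕ) :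
    ∀ g : ℕ → (Fin n → Fin q) → ℝ, (∀ t ∈ F, memU n q t (g t)) →
    (∀ x, ∑ t ∈ F, g t x = 0) → ∀ t ∈ F, ∀ x, g t x = 0 := by
  classical
  induction F using Finset.induction_on with
  | empty => intro g _ _ t ht; exact absurd ht (Finset.notMem_empty t)
  | @insert a Fs ha ih =>
      intro g hmem hsum
      have hqR : (0:ℝ) < (q:ℝ) := by exact_mod_cast hq
      -- the sum over Fs equals -g a
      have hFs : ∀ x, ∑ t ∈ Fs, g t x = -(g a x) := by
        intro x
        have := hsum x
        rw [Finset.sum_insert ha] at this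
        linarith
      -- auxiliary scaled family
      set lam : ℕ → ℝ := fun t => (n:ℝ) * ((q:ℝ)-1) - (q:ℝ)*(t:ℝ) with hlam
      have key : ∀ t ∈ Fs, ∀ x, (lam t - lam a) * g t x = 0 := by
        apply ih (fun t => fun x => (lam t - lam a) * g t x)
        · intro t ht
          exact memU_smul _ (hmem t (Finset.mem_insert_of_mem ht))
        · intro x
          have hsub : ∀ t ∈ Fs, (lam t - lam a) * g t x = lam t * g t x - lam a * g t x := by
            intro t _; ring
          rw [Finset.sum_congr rfl hsub, Finset.sum_sub_distrib]
          have h2 : ∀ t ∈ Fs, lam t * g t x = adjSum n q (g t) x := by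
            intro t ht
            exact (hmem t (Finset.mem_insert_of_mem ht) x).symm
          rw [Finset.sum_congr rfl h2, ← adjSum_sum, ← Finset.mul_sum]
          have h3 : adjSum n q (fun y => ∑ t ∈ Fs, g t y) x = adjSum n q (fun y => -(g a y)) x := by
            apply adjSum_congr
            intro y; exact hFs y
          rw [h3, hFs x]
          have h4 : adjSum n q (fun y => -(g a y)) x
              = adjSum n q (fun y => (-1 : ℝ) * g a y) x := by
            apply adjSum_congr; intro y; ring
          rw [h4, adjSum_smul, hmem a (Finset.mem_insert_self a Fs) x]
          ring
      have hFs0 : ∀ t ∈ Fs, ∀ x, g t x = 0 := by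
        intro t ht x
        have h5 := key t ht x
        have h6 : lam t - lam a ≠ 0 := by
          have : (t:ℝ) ≠ (a:ℝ) := by
            have : t ≠ a := fun h => ha (h ▸ ht)
            exact_mod_cast this
          rw [hlam]
          intro hcon
          apply this
          have : (q:ℝ) * (t:ℝ) = (q:ℝ) * (a:ℝ) := by ring_nf at hcon ⊢; linarith
          exact mul_left_cancel₀ (ne_of_gt hqR) this
        rcases mul_eq_zero.mp h5 with h | h
        · exact absurd h h6
        · exact h
      intro t ht x
      rcases Finset.mem_insert.mp ht with h | h
      · subst h
        have := hFs x
        have h7 : ∑ t ∈ Fs, g t x = 0 := Finset.sum_eq_zero fun s hs => hFs0 s hs x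
        rw [h7] at this
        linarith
      · exact hFs0 t h x

/-- Intersection lemma: if F is in both U_{[i'+1,j'+1]} and U_{[i',j']} then the top
component vanishes. -/
theorem memUI_inter {n q i' j' : ℕ} (hq : 0 < q) {F : (Fin n → Fin q) → ℝ}
    (h1 : memUI n q (i'+1) (j'+1) F) (h2 : memUI n q i' j' F) (hij : i' ≤ j') :
    (i' = j' ∧ F = 0) ∨ (i' < j' ∧ memUI n q (i'+1) j' F) := by
  classical
  obtain ⟨u, hu, huF⟩ := h1
  obtain ⟨v, hv, hvF⟩ := h2
  set w : ℕ → (Fin n → Fin q) → ℝ := fun t => fun x =>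
    (if t ∈ Finset.Icc (i'+1) (j'+1) then u t x else 0)
    - (if t ∈ Finset.Icc i' j' then v t x else 0) with hw
  have hwmem : ∀ t ∈ Finset.Icc i' (j'+1), memU n q t (w t) := by
    intro t _
    apply memU_sub
    · split
      · exact hu t (by assumption)
      · exact memU_zero n q t
    · split
      · exact hv t (by assumption)
      · exact memU_zero n q t
  have hwsum : ∀ x, ∑ t ∈ Finset.Icc i' (j'+1), w t x = 0 := by
    intro x
    rw [Finset.sum_sub_distrib]
    have e1 : ∑ t ∈ Finset.Icc i' (j'+1), (if t ∈ Finset.Icc (i'+1) (j'+1) then u t x else 0)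
        = ∑ t ∈ Finset.Icc (i'+1) (j'+1), u t x := by
      rw [Finset.sum_ite_mem]
      congr 1
      ext s
      simp only [Finset.mem_inter, Finset.mem_Icc]
      omega
    have e2 : ∑ t ∈ Finset.Icc i' (j'+1), (if t ∈ Finset.Icc i' j' then v t x else 0)
        = ∑ t ∈ Finset.Icc i' j', v t x := by
      rw [Finset.sum_ite_mem]
      congr 1
      ext s
      simp only [Finset.mem_inter, Finset.mem_Icc]
      omega
    rw [e1, e2]
    have eu : ∑ t ∈ Finset.Icc (i'+1) (j'+1), u t x = F x := by
      rw [huF]; exact (Finset.sum_apply x _ u).symm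
    have ev : ∑ t ∈ Finset.Icc i' j', v t x = F x := by
      rw [hvF]; exact (Finset.sum_apply x _ v).symm
    rw [eu, ev]; ring
  have hall := indep_eigen hq (Finset.Icc i' (j'+1)) w hwmem hwsum
  have htop : ∀ x, u (j'+1) x = 0 := by
    intro x
    have h5 := hall (j'+1) (by simp [Finset.mem_Icc]; omega) x
    rw [hw] at h5
    simp only [Finset.mem_Icc] at h5
    have c1 : (if i' + 1 ≤ j' + 1 ∧ j' + 1 ≤ j' + 1 then u (j'+1) x else 0) = u (j'+1) x := by
      rw [if_pos (by omega)]
    have c2 : (if i' ≤ j' + 1 ∧ j' + 1 ≤ j' then v (j'+1) x else 0) = 0 := by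
      rw [if_neg (by omega)]
    rw [c1, c2] at h5
    linarith
  have hFeq : F = ∑ t ∈ Finset.Icc (i'+1) j', u t := by
    rw [huF, Finset.sum_Icc_succ_top (by omega : i' + 1 ≤ j' + 1)]
    funext x
    rw [Pi.add_apply, htop x, add_zero]
  rcases Nat.lt_or_ge i' j' with hlt | hge
  · right
    exact ⟨hlt, u, fun t ht => hu t (by simp only [Finset.mem_Icc] at ht ⊢; omega), hFeq⟩
  · left
    have : i' = j' := le_antisymm hij hge
    refine ⟨this, ?_⟩
    rw [hFeq]
    have : Finset.Icc (i'+1) j' = ∅ := by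
      rw [Finset.Icc_eq_empty_iff]
      omega
    rw [this, Finset.sum_empty]

/-! ### memUI lemmas for restrictions -/

theorem sum_shift {M : Type*} [AddCommMonoid M] (F : ℕ → M) (i j : ℕ) :
    ∑ s ∈ Finset.Icc i j, F (s+1) = ∑ t ∈ Finset.Icc (i+1) (j+1), F t := by
  rw [← Finset.map_add_right_Icc i j 1, Finset.sum_map]
  rfl

theorem Icc_zero_insert (m : ℕ) : Finset.Icc 0 (m+1) = insert 0 (Finset.Icc 1 (m+1)) := by
  ext s
  simp only [Finset.mem_Icc, Finset.mem_insert]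
  omega

theorem res_sum_apply {n q : ℕ} {f : (Fin (n+1) → Fin q) → ℝ} {T : Finset ℕ}
    {g : ℕ → (Fin (n+1) → Fin q) → ℝ} (hf : f = ∑ t ∈ T, g t) (k : Fin q)
    (y : Fin n → Fin q) : res n q f k y = ∑ t ∈ T, res n q (g t) k y := by
  show f (Fin.cons k y) = _
  rw [hf]
  exact Finset.sum_apply _ _ _

theorem memUI_S {n q i j : ℕ} {f : (Fin (n+1) → Fin q) → ℝ} (h : memUI (n+1) q i j f) :
    memUI n q i j (Ssum n q f) := by
  obtain ⟨g, hg, hf⟩ := h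
  refine ⟨fun t => Ssum n q (g t), fun t ht => memU_S (hg t ht), ?_⟩
  funext y
  rw [Finset.sum_apply]
  unfold Ssum
  rw [Finset.sum_congr rfl fun k _ => res_sum_apply hf k y]
  exact Finset.sum_comm

theorem memUI_D {n q i' j' : ℕ} {f : (Fin (n+1) → Fin q) → ℝ}
    (h : memUI (n+1) q (i'+1) (j'+1) f) (a b : Fin q) :
    memUI n q i' j' (fun y => res n q f a y - res n q f b y) := by
  obtain ⟨g, hg, hf⟩ := h
  refine ⟨fun s => fun y => res n q (g (s+1)) a y - res n q (g (s+1)) b y, ?_, ?_⟩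
  · intro s hs
    simp only [Finset.mem_Icc] at hs
    have := memU_D (hg (s+1) (by simp only [Finset.mem_Icc]; omega))
      (Nat.le_add_left 1 s) a b
    simpa using this
  · funext y
    rw [Finset.sum_apply]
    rw [sum_shift (fun t => res n q (g t) a y - res n q (g t) b y) i' j']
    rw [res_sum_apply hf a y, res_sum_apply hf b y, ← Finset.sum_sub_distrib]

theorem memUI_D0 {n q j' : ℕ} (hq : 0 < q) {f : (Fin (n+1) → Fin q) → ℝ}
    (h : memUI (n+1) q 0 (j'+1) f) (a b : Fin q) :
    memUI n q 0 j' (fun y => res n q f a y - res n q f b y) := by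
  obtain ⟨g, hg, hf⟩ := h
  refine ⟨fun s => fun y => res n q (g (s+1)) a y - res n q (g (s+1)) b y, ?_, ?_⟩
  · intro s hs
    simp only [Finset.mem_Icc] at hs
    have := memU_D (hg (s+1) (by simp only [Finset.mem_Icc]; omega))
      (Nat.le_add_left 1 s) a b
    simpa using this
  · funext y
    rw [Finset.sum_apply]
    rw [sum_shift (fun t => res n q (g t) a y - res n q (g t) b y) 0 j']
    rw [res_sum_apply hf a y, res_sum_apply hf b y, ← Finset.sum_sub_distrib]
    rw [Icc_zero_insert j', Finset.sum_insert (by simp)]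
    have h0 : res n q (g 0) a y - res n q (g 0) b y = 0 := by
      rw [memU_D0 hq (hg 0 (by simp)) a b]
      ring
    rw [h0, zero_add]

section Res

variable {n q : ℕ} {f : (Fin (n+1) → Fin q) → ℝ}

private theorem Dt_mem (hq : 0 < q) {t : ℕ} {G : (Fin (n+1) → Fin q) → ℝ}
    (hG : memU (n+1) q t G) (ht : 1 ≤ t) (k : Fin q) :
    memU n q (t-1) (fun y => res n q G k y - (q:ℝ)⁻¹ * Ssum n q G y) := by
  have hqR : ((q:ℝ)) ≠ 0 := by positivity
  apply memU_congr (f := fun y => (q:ℝ)⁻¹ *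
    ∑ m : Fin q, (res n q G k y - res n q G m y))
  · intro y
    rw [Finset.sum_sub_distrib, Finset.sum_const, Finset.card_univ, Fintype.card_fin,
      nsmul_eq_mul]
    have : (∑ m : Fin q, res n q G m y) = Ssum n q G y := rfl
    rw [this]
    field_simp
  · exact memU_smul _ (memU_sum Finset.univ _ (fun m _ => memU_D hG ht k m))

private theorem Dt_zero (hq : 0 < q) {G : (Fin (n+1) → Fin q) → ℝ}
    (hG : memU (n+1) q 0 G) (k : Fin q) (y : Fin n → Fin q) :
    res n q G k y - (q:ℝ)⁻¹ * Ssum n q G y = 0 := by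
  have hqR : ((q:ℝ)) ≠ 0 := by positivity
  have hall : ∀ m : Fin q, res n q G m y = res n q G k y := by
    intro m
    rw [memU_D0 hq hG m k]
  have : Ssum n q G y = (q:ℝ) * res n q G k y := by
    unfold Ssum
    rw [Finset.sum_congr rfl fun m _ => hall m, Finset.sum_const, Finset.card_univ,
      Fintype.card_fin, nsmul_eq_mul]
  rw [this]
  field_simp
  ring

theorem memUI_res {i' j' : ℕ} (hq : 0 < q) (h : memUI (n+1) q (i'+1) (j'+1) f)
    (k : Fin q) : memUI n q i' (j'+1) (res n q f k) := by
  obtain ⟨g, hg, hf⟩ := h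
  set At : ℕ → (Fin n → Fin q) → ℝ := fun t => fun y => (q:ℝ)⁻¹ * Ssum n q (g t) y with hAt
  set Dt : ℕ → (Fin n → Fin q) → ℝ := fun t => fun y => res n q (g t) k y - At t y with hDt
  refine ⟨fun s => fun y => (if i'+1 ≤ s then At s y else 0)
    + (if s ≤ j' then Dt (s+1) y else 0), ?_, ?_⟩
  · intro s hs
    simp only [Finset.mem_Icc] at hs
    apply memU_add
    · by_cases c1 : i'+1 ≤ s
      · simp only [if_pos c1]
        exact memU_smul _ (memU_S (hg s (by simp only [Finset.mem_Icc]; omega)))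
      · simp only [if_neg c1]
        exact memU_zero n q s
    · by_cases c2 : s ≤ j'
      · simp only [if_pos c2]
        have := Dt_mem hq (hg (s+1) (by simp only [Finset.mem_Icc]; omega))
          (Nat.le_add_left 1 s) k
        simpa using this
      · simp only [if_neg c2]
        exact memU_zero n q s
  · funext y
    rw [Finset.sum_apply, Finset.sum_add_distrib]
    have e1 : ∑ s ∈ Finset.Icc i' (j'+1), (if i'+1 ≤ s then At s y else 0)
        = ∑ s ∈ Finset.Icc (i'+1) (j'+1), At s y := by
      rw [← Finset.sum_filter]
      congr 1
      ext s
      simp only [Finset.mem_filter, Finset.mem_Icc]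
      omega
    have e2 : ∑ s ∈ Finset.Icc i' (j'+1), (if s ≤ j' then Dt (s+1) y else 0)
        = ∑ s ∈ Finset.Icc i' j', Dt (s+1) y := by
      rw [← Finset.sum_filter]
      congr 1
      ext s
      simp only [Finset.mem_filter, Finset.mem_Icc]
      omega
    rw [e1, e2, sum_shift (fun t => Dt t y) i' j', ← Finset.sum_add_distrib]
    rw [res_sum_apply hf k y]
    apply Finset.sum_congr rfl
    intro t _
    rw [hDt]
    ring

theorem memUI_res0 {j' : ℕ} (hq : 0 < q) (h : memUI (n+1) q 0 (j'+1) f)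
    (k : Fin q) : memUI n q 0 (j'+1) (res n q f k) := by
  obtain ⟨g, hg, hf⟩ := h
  set At : ℕ → (Fin n → Fin q) → ℝ := fun t => fun y => (q:ℝ)⁻¹ * Ssum n q (g t) y with hAt
  set Dt : ℕ → (Fin n → Fin q) → ℝ := fun t => fun y => res n q (g t) k y - At t y with hDt
  refine ⟨fun s => fun y => At s y + (if s ≤ j' then Dt (s+1) y else 0), ?_, ?_⟩
  · intro s hs
    simp only [Finset.mem_Icc] at hs
    apply memU_add
    · exact memU_smul _ (memU_S (hg s (by simp only [Finset.mem_Icc]; omega)))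
    · by_cases c2 : s ≤ j'
      · simp only [if_pos c2]
        have := Dt_mem hq (hg (s+1) (by simp only [Finset.mem_Icc]; omega))
          (Nat.le_add_left 1 s) k
        simpa using this
      · simp only [if_neg c2]
        exact memU_zero n q s
  · funext y
    rw [Finset.sum_apply, Finset.sum_add_distrib]
    have e2 : ∑ s ∈ Finset.Icc 0 (j'+1), (if s ≤ j' then Dt (s+1) y else 0)
        = ∑ s ∈ Finset.Icc 0 j', Dt (s+1) y := by
      rw [← Finset.sum_filter]
      congr 1
      ext s
      simp only [Finset.mem_filter, Finset.mem_Icc]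
      omega
    have e3 : ∑ s ∈ Finset.Icc 0 j', Dt (s+1) y = ∑ t ∈ Finset.Icc 0 (j'+1), Dt t y := by
      rw [sum_shift (fun t => Dt t y) 0 j', Icc_zero_insert j',
        Finset.sum_insert (by simp)]
      have h0 : Dt 0 y = 0 := Dt_zero hq (hg 0 (by simp)) k y
      rw [h0]
      simp
    rw [e2, e3, ← Finset.sum_add_distrib]
    rw [res_sum_apply hf k y]
    apply Finset.sum_congr rfl
    intro t _
    rw [hDt]
    ring

end Res

/-! ### Support counting -/

theorem suppCard_eq_filter (n q : ℕ) (f : (Fin n → Fin q) → ℝ) :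
    suppCard n q f = (Finset.univ.filter fun x => f x ≠ 0).card := by
  classical
  rw [suppCard, Nat.card_eq_fintype_card, Fintype.card_subtype]

theorem suppCard_cons (n q : ℕ) (f : (Fin (n+1) → Fin q) → ℝ) :
    suppCard (n+1) q f = ∑ k : Fin q, suppCard n q (res n q f k) := by
  classical
  rw [suppCard_eq_filter, Finset.card_filter, sum_cube_succ]
  apply Finset.sum_congr rfl
  intro k _
  rw [suppCard_eq_filter, Finset.card_filter]
  rfl

theorem suppCard_pos {n q : ℕ} {f : (Fin n → Fin q) → ℝ} (hf : f ≠ 0) :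
    1 ≤ suppCard n q f := by
  classical
  rw [suppCard_eq_filter]
  rw [Nat.one_le_iff_ne_zero, Ne, Finset.card_eq_zero, ← Ne, ← Finset.nonempty_iff_ne_empty]
  have : ∃ x, f x ≠ 0 := by
    by_contra hc
    push_neg at hc
    exact hf (funext hc)
  obtain ⟨x, hx⟩ := this
  exact ⟨x, Finset.mem_filter.mpr ⟨Finset.mem_univ x, hx⟩⟩

theorem suppCard_diff_le (n q : ℕ) (g h : (Fin n → Fin q) → ℝ) :
    suppCard n q (fun y => g y - h y) ≤ suppCard n q g + suppCard n q h := by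
  classical
  rw [suppCard_eq_filter, suppCard_eq_filter, suppCard_eq_filter]
  calc (Finset.univ.filter fun y => g y - h y ≠ 0).card
      ≤ ((Finset.univ.filter fun y => g y ≠ 0) ∪ (Finset.univ.filter fun y => h y ≠ 0)).card := by
        apply Finset.card_le_card
        intro y hy
        simp only [Finset.mem_filter, Finset.mem_univ, true_and] at hy
        simp only [Finset.mem_union, Finset.mem_filter, Finset.mem_univ, true_and]
        by_contra hc
        push_neg at hc
        apply hy
        rw [hc.1, hc.2, sub_zero]
    _ ≤ _ := Finset.card_union_le _ _

theorem f_eq_zero_of_res {n q : ℕ} {f : (Fin (n+1) → Fin q) → ℝ}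
    (h : ∀ k, res n q f k = 0) : f = 0 := by
  funext x
  have := congrFun (h (x 0)) (Fin.tail x)
  rw [res] at this
  rw [Fin.cons_self_tail] at this
  exact this

/-! ### The bound and arithmetic -/

noncomputable def Breal (q i j n : ℕ) : ℝ :=
  2^i * ((q:ℝ)-1)^i * (q:ℝ)^n / (q:ℝ)^(i+j)

theorem Breal_pos {q : ℕ} (hq : 3 ≤ q) (i j n : ℕ) : 0 < Breal q i j n := by
  have hqR : (3:ℝ) ≤ (q:ℝ) := by exact_mod_cast hq
  unfold Breal
  have h1 : (0:ℝ) < (q:ℝ) := by linarith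
  have h2 : (0:ℝ) < (q:ℝ) - 1 := by linarith
  positivity

theorem Breal_succ {q : ℕ} (hq : 3 ≤ q) (i j n : ℕ) :
    Breal q i j (n+1) = (q:ℝ) * Breal q i j n := by
  have hqR : (3:ℝ) ≤ (q:ℝ) := by exact_mod_cast hq
  unfold Breal
  rw [pow_succ]
  field_simp

theorem caseI_arith {q c : ℕ} (hq : 3 ≤ q) (hc1 : 1 ≤ c) (hc2 : c < q) {β t S : ℝ}
    (hβ : 0 < β) (ht : β ≤ t)
    (hS : (c:ℝ) * t + ((q:ℝ) - (c:ℝ)) * max t ((q:ℝ)*β - t) ≤ S) :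
    2 * ((q:ℝ)-1) * β ≤ S := by
  have hqR : (3:ℝ) ≤ (q:ℝ) := by exact_mod_cast hq
  have hcR : (1:ℝ) ≤ (c:ℝ) := by exact_mod_cast hc1
  have hcq : (c:ℝ) + 1 ≤ (q:ℝ) := by exact_mod_cast hc2
  rcases le_total ((q:ℝ)*β - t) t with h | h
  · rw [max_eq_left h] at hS
    nlinarith [mul_nonneg (mul_nonneg (sq_nonneg ((q:ℝ)-2)) hβ.le) (by linarith : (0:ℝ) ≤ 1),
      sq_nonneg ((q:ℝ)-2), mul_nonneg (sq_nonneg ((q:ℝ)-2)) hβ.le]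
  · rw [max_eq_right h] at hS
    rcases le_total ((q:ℝ)) (2*(c:ℝ)) with h2 | h2
    · nlinarith [mul_nonneg (sub_nonneg.mpr ht) (by linarith : (0:ℝ) ≤ 2*(c:ℝ) - (q:ℝ)),
        mul_nonneg (mul_nonneg (by linarith : (0:ℝ) ≤ (q:ℝ)-1-(c:ℝ))
          (by linarith : (0:ℝ) ≤ (q:ℝ)-2)) hβ.le]
    · nlinarith [mul_nonneg (by linarith : (0:ℝ) ≤ (q:ℝ)*β - 2*t)
        (by linarith : (0:ℝ) ≤ (q:ℝ) - 2*(c:ℝ)),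
        mul_nonneg (sq_nonneg ((q:ℝ)-2)) hβ.le]

theorem Breal_step1 {q : ℕ} (hq : 3 ≤ q) (i j n : ℕ) :
    Breal q i j n = (q:ℝ) * Breal q i (j+1) n := by
  have hqR : (3:ℝ) ≤ (q:ℝ) := by exact_mod_cast hq
  unfold Breal
  rw [show i + (j+1) = (i+j)+1 from rfl, pow_succ]
  have : ((q:ℝ))^(i+j) ≠ 0 := by positivity
  field_simp

theorem Breal_step2 {q : ℕ} (hq : 3 ≤ q) (i' j' n : ℕ) :
    Breal q (i'+1) (j'+1) (n+1) = 2*((q:ℝ)-1) * Breal q i' (j'+1) n := by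
  have hqR : (3:ℝ) ≤ (q:ℝ) := by exact_mod_cast hq
  unfold Breal
  rw [show (i'+1) + (j'+1) = (i'+(j'+1))+1 from by omega, pow_succ, pow_succ, pow_succ,
    pow_succ]
  have h1 : ((q:ℝ))^(i'+(j'+1)) ≠ 0 := by positivity
  have h2 : ((q:ℝ)) ≠ 0 := by positivity
  field_simp

theorem Breal_step3 {q : ℕ} (hq : 3 ≤ q) (i j' n : ℕ) :
    Breal q i j' n = Breal q i (j'+1) (n+1) := by
  have hqR : (3:ℝ) ≤ (q:ℝ) := by exact_mod_cast hq
  unfold Breal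
  rw [show i + (j'+1) = (i+j')+1 from rfl, pow_succ, pow_succ]
  have h1 : ((q:ℝ))^(i+j') ≠ 0 := by positivity
  have h2 : ((q:ℝ)) ≠ 0 := by positivity
  field_simp

theorem adjSum_dim0 (q : ℕ) (h : (Fin 0 → Fin q) → ℝ) (x : Fin 0 → Fin q) :
    adjSum 0 q h x = 0 := by
  unfold adjSum
  apply Finset.sum_eq_zero
  intro y _
  have hyx : y = x := funext fun i => i.elim0
  subst hyx
  rw [hammingDist_self]
  simp

/-! ### Main induction -/

theorem main_bound {q : ℕ} (hq : 3 ≤ q) :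
    ∀ n i j (f : (Fin n → Fin q) → ℝ), i ≤ j → f ≠ 0 → memUI n q i j f →
      Breal q i j n ≤ (suppCard n q f : ℝ) := by
  have hq0 : 0 < q := by omega
  have hqR : (3:ℝ) ≤ (q:ℝ) := by exact_mod_cast hq
  intro n
  induction n with
  | zero =>
      intro i j f hij hne hmem
      obtain ⟨g, hg, hf⟩ := hmem
      rcases Nat.eq_zero_or_pos i with hi0 | hi1
      · subst hi0
        have h1 : (1:ℝ) ≤ (suppCard 0 q f : ℝ) := by
          exact_mod_cast suppCard_pos hne
        have h2 : Breal q 0 j 0 ≤ 1 := by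
          unfold Breal
          rw [pow_zero, pow_zero, pow_zero, zero_add]
          rw [div_le_one (by positivity)]
          have hone : (1:ℝ) ≤ (q:ℝ) := by linarith
          calc (1:ℝ) * 1 * 1 = 1 := by ring
            _ ≤ (q:ℝ)^j := one_le_pow₀ hone
        linarith
      · exfalso
        apply hne
        have hz : ∀ t ∈ Finset.Icc i j, ∀ x, g t x = 0 := by
          intro t ht x
          simp only [Finset.mem_Icc] at ht
          have heig := hg t (by simp only [Finset.mem_Icc]; omega) x
          rw [adjSum_dim0] at heig
          have hlam : ((0:ℕ):ℝ) * ((q:ℝ)-1) - (q:ℝ)*(t:ℝ) ≠ 0 := by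
            have ht1 : (1:ℝ) ≤ (t:ℝ) := by exact_mod_cast (by omega : 1 ≤ t)
            simp only [Nat.cast_zero, zero_mul, zero_sub]
            intro hcon
            nlinarith
          have := (mul_eq_zero.mp heig.symm)
          rcases this with h | h
          · exact absurd h hlam
          · exact h
        rw [hf]
        funext x
        rw [Finset.sum_apply]
        exact Finset.sum_eq_zero fun t ht => hz t ht x
  | succ n IH =>
      intro i j f hij hne hmem
      haveI hFq : Nonempty (Fin q) := ⟨⟨0, hq0⟩⟩
      classical
      by_cases hdep : ∀ a b : Fin q, res n q f a = res n q f b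
      · -- Case B : f does not depend on the first coordinate
        set z₀ : Fin q := ⟨0, hq0⟩ with hz₀
        have hS : memUI n q i j (Ssum n q f) := memUI_S hmem
        have hr0ne : res n q f z₀ ≠ 0 := by
          intro hcon
          apply hne
          apply f_eq_zero_of_res
          intro k
          rw [hdep k z₀, hcon]
        have hres0 : ∀ y, Ssum n q f y = (q:ℝ) * res n q f z₀ y := by
          intro y
          unfold Ssum
          rw [Finset.sum_congr rfl fun k _ => congrFun (hdep k z₀) y,
            Finset.sum_const, Finset.card_univ, Fintype.card_fin, nsmul_eq_mul]
        have hSne : Ssum n q f ≠ 0 := by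
          intro hcon
          apply hr0ne
          funext y
          have := congrFun hcon y
          rw [hres0 y] at this
          have hq0R : ((q:ℝ)) ≠ 0 := by positivity
          simpa [hq0R] using this
        have hIH := IH i j (Ssum n q f) hij hSne hS
        have hsupp_eq : suppCard n q (Ssum n q f) = suppCard n q (res n q f z₀) := by
          rw [suppCard_eq_filter, suppCard_eq_filter]
          congr 1
          apply Finset.filter_congr
          intro y _
          rw [hres0 y]
          have hq0R : ((q:ℝ)) ≠ 0 := by positivity
          simp [hq0R]
        have hsupp_f : suppCard (n+1) q f = q * suppCard n q (res n q f z₀) := by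
          rw [suppCard_cons]
          rw [Finset.sum_congr rfl fun k _ => by rw [hdep k z₀]]
          rw [Finset.sum_const, Finset.card_univ, Fintype.card_fin, smul_eq_mul]
        rw [Breal_succ hq, hsupp_f]
        push_cast
        rw [hsupp_eq] at hIH
        have : (0:ℝ) < q := by linarith
        calc (q:ℝ) * Breal q i j n ≤ (q:ℝ) * (suppCard n q (res n q f z₀) : ℝ) := by
              apply mul_le_mul_of_nonneg_left hIH (by linarith)
          _ = _ := by push_cast; ring
      · push_neg at hdep
        obtain ⟨a, b, hab⟩ := hdep
        -- j must be positive
        rcases j with _ | j'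
        · exfalso
          have hi0 : i = 0 := by omega
          subst hi0
          obtain ⟨g, hg, hf⟩ := hmem
          have hfU : memU (n+1) q 0 f := by
            apply memU_congr (f := g 0)
            · intro y
              rw [hf]
              rw [Finset.sum_apply]
              rw [show Finset.Icc 0 0 = {0} from rfl, Finset.sum_singleton]
            · exact hg 0 (by simp)
          exact hab (memU_D0 hq0 hfU a b)
        · by_cases hz : ∀ k, res n q f k ≠ 0
          · rcases Nat.eq_zero_or_pos i with hi0 | hi1
            · -- case (b) : i = 0, all restrictions nonzero
              subst hi0
              have hIHk : ∀ k : Fin q, Breal q 0 (j'+1) n ≤ (suppCard n q (res n q f k) : ℝ) :=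
                fun k => IH 0 (j'+1) (res n q f k) (by omega) (hz k) (memUI_res0 hq0 hmem k)
              rw [Breal_succ hq, suppCard_cons]
              push_cast
              calc (q:ℝ) * Breal q 0 (j'+1) n
                  = ∑ _k : Fin q, Breal q 0 (j'+1) n := by
                    rw [Finset.sum_const, Finset.card_univ, Fintype.card_fin, nsmul_eq_mul]
                _ ≤ ∑ k : Fin q, (suppCard n q (res n q f k) : ℝ) :=
                    Finset.sum_le_sum fun k _ => hIHk k
            · -- case (I) : i ≥ 1, all restrictions nonzero
              obtain ⟨i', rfl⟩ : ∃ i', i = i' + 1 := ⟨i - 1, by omega⟩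
              set s : Fin q → ℕ := fun k => suppCard n q (res n q f k) with hs
              obtain ⟨k₀, -, hk₀⟩ := Finset.exists_min_image Finset.univ (fun k => s k)
                ⟨a, Finset.mem_univ a⟩
              set β : ℝ := Breal q i' (j'+1) n with hβ
              have hβpos : 0 < β := Breal_pos hq i' (j'+1) n
              have hβ₁ : ∀ k, β ≤ (s k : ℝ) := fun k =>
                IH i' (j'+1) (res n q f k) (by omega) (hz k) (memUI_res hq0 hmem k)
              have hdiff : ∀ k, res n q f k ≠ res n q f k₀ →
                  (q:ℝ)*β - (s k₀:ℝ) ≤ (s k : ℝ) := by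
                intro k hkne
                have hdne : (fun y => res n q f k y - res n q f k₀ y) ≠ 0 := by
                  intro hcon
                  apply hkne
                  funext y
                  have := congrFun hcon y
                  simp only [Pi.zero_apply] at this
                  linarith
                have hIH2 := IH i' j' (fun y => res n q f k y - res n q f k₀ y)
                  (by omega) hdne (memUI_D hmem k k₀)
                have hsub : (suppCard n q (fun y => res n q f k y - res n q f k₀ y) : ℝ)
                    ≤ (s k : ℝ) + (s k₀ : ℝ) := by
                  exact_mod_cast suppCard_diff_le n q (res n q f k) (res n q f k₀)
                have heq : Breal q i' j' n = (q:ℝ) * β := Breal_step1 hq i' j' n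
                rw [heq] at hIH2
                linarith
              set C : Finset (Fin q) := Finset.univ.filter (fun k => res n q f k = res n q f k₀)
                with hC
              have hk₀C : k₀ ∈ C := Finset.mem_filter.mpr ⟨Finset.mem_univ _, rfl⟩
              have hc1 : 1 ≤ C.card := Finset.card_pos.mpr ⟨k₀, hk₀C⟩
              have hCne : C ≠ Finset.univ := by
                intro hcon
                have hain : a ∈ C := hcon ▸ Finset.mem_univ a
                have hbin : b ∈ C := hcon ▸ Finset.mem_univ b
                apply hab
                rw [(Finset.mem_filter.mp hain).2, (Finset.mem_filter.mp hbin).2]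
              have hc2 : C.card < q := by
                have := Finset.card_lt_card (Finset.ssubset_univ_iff.mpr hCne)
                rwa [Finset.card_univ, Fintype.card_fin] at this
              set t : ℝ := (s k₀ : ℝ) with hts
              have htmin : ∀ k : Fin q, t ≤ (s k : ℝ) := by
                intro k
                rw [hts]
                exact_mod_cast hk₀ k (Finset.mem_univ k)
              -- sum bound
              have hsum1 : (C.card : ℝ) * t ≤ ∑ k ∈ C, (s k : ℝ) := by
                have := Finset.card_nsmul_le_sum C (fun k => (s k:ℝ)) t
                  (fun k _ => htmin k)
                rwa [nsmul_eq_mul] at this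
              have hsum2 : ((q:ℝ) - C.card) * max t ((q:ℝ)*β - t)
                  ≤ ∑ k ∈ Finset.univ \ C, (s k : ℝ) := by
                have hcard : (Finset.univ \ C).card = q - C.card := by
                  rw [Finset.card_sdiff, Finset.inter_univ, Finset.card_univ,
                    Fintype.card_fin]
                have hbound : ∀ k ∈ Finset.univ \ C, max t ((q:ℝ)*β - t) ≤ (s k : ℝ) := by
                  intro k hk
                  rw [Finset.mem_sdiff] at hk
                  have hknotC : res n q f k ≠ res n q f k₀ := by
                    intro hcon
                    exact hk.2 (Finset.mem_filter.mpr ⟨Finset.mem_univ _, hcon⟩)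
                  exact max_le (htmin k) (hdiff k hknotC)
                have := Finset.card_nsmul_le_sum (Finset.univ \ C)
                  (fun k => (s k:ℝ)) (max t ((q:ℝ)*β - t)) hbound
                rw [hcard, nsmul_eq_mul] at this
                have hcast : ((q - C.card : ℕ) : ℝ) = (q:ℝ) - (C.card:ℝ) := by
                  rw [Nat.cast_sub (by omega)]
                rwa [hcast] at this
              have htotal : ∑ k ∈ C, (s k : ℝ) + ∑ k ∈ Finset.univ \ C, (s k:ℝ)
                  = (suppCard (n+1) q f : ℝ) := by
                rw [suppCard_cons]
                push_cast
                rw [← Finset.sum_sdiff (Finset.subset_univ C)]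
                ring
              have htβ : β ≤ t := by
                rw [hts]
                exact hβ₁ k₀
              have hfinal : (C.card:ℝ) * t + ((q:ℝ) - (C.card:ℝ)) * max t ((q:ℝ)*β - t)
                  ≤ (suppCard (n+1) q f : ℝ) := by
                rw [← htotal]
                exact add_le_add hsum1 hsum2
              have harith := caseI_arith hq hc1 hc2 hβpos htβ hfinal
              rw [Breal_step2 hq]
              exact harith
          · -- case (II) : some restriction vanishes
            push_neg at hz
            obtain ⟨k₀, hk₀⟩ := hz
            have hressum : ∀ m, (fun y => res n q f m y - res n q f k₀ y) = res n q f m := by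
              intro m
              funext y
              rw [congrFun hk₀ y]
              simp
            rcases Nat.eq_zero_or_pos i with hi0 | hi1
            · -- case (a) : i = 0
              subst hi0
              have hm : ∃ m, res n q f m ≠ 0 := by
                by_contra hcon
                push_neg at hcon
                exact hne (f_eq_zero_of_res hcon)
              obtain ⟨m, hmne⟩ := hm
              have hmem2 : memUI n q 0 j' (res n q f m) := by
                have := memUI_D0 hq0 hmem m k₀
                rwa [hressum m] at this
              have hIH2 := IH 0 j' (res n q f m) (by omega) hmne hmem2
              have hstep : Breal q 0 j' n = Breal q 0 (j'+1) (n+1) := Breal_step3 hq 0 j' n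
              rw [← hstep]
              refine le_trans hIH2 ?_
              have : suppCard n q (res n q f m) ≤ suppCard (n+1) q f := by
                rw [suppCard_cons]
                exact Finset.single_le_sum
                  (f := fun k => suppCard n q (res n q f k))
                  (fun k _ => Nat.zero_le _) (Finset.mem_univ m)
              exact_mod_cast this
            · -- i ≥ 1
              obtain ⟨i', rfl⟩ : ∃ i', i = i' + 1 := ⟨i - 1, by omega⟩
              have hmemD : ∀ m, memUI n q i' j' (res n q f m) := by
                intro m
                have := memUI_D hmem m k₀
                rwa [hressum m] at this
              set Nz : Finset (Fin q) := Finset.univ.filter (fun m => res n q f m ≠ 0)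
                with hNz
              have hNzne : Nz.Nonempty := by
                by_contra hcon
                rw [Finset.not_nonempty_iff_eq_empty] at hcon
                apply hne
                apply f_eq_zero_of_res
                intro k
                by_contra hkne
                have : k ∈ Nz := Finset.mem_filter.mpr ⟨Finset.mem_univ _, hkne⟩
                rw [hcon] at this
                exact absurd this (Finset.notMem_empty k)
              by_cases hN2 : 2 ≤ Nz.card
              · -- at least two nonzero restrictions
                set B₂ : ℝ := Breal q i' j' n with hB₂
                have hIHm : ∀ m ∈ Nz, B₂ ≤ (suppCard n q (res n q f m) : ℝ) := by
                  intro m hmm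
                  exact IH i' j' (res n q f m) (by omega)
                    ((Finset.mem_filter.mp hmm).2) (hmemD m)
                have hsum : 2 * B₂ ≤ (suppCard (n+1) q f : ℝ) := by
                  rw [suppCard_cons]
                  push_cast
                  calc 2 * B₂ ≤ (Nz.card : ℝ) * B₂ := by
                        have : (2:ℝ) ≤ (Nz.card : ℝ) := by exact_mod_cast hN2
                        nlinarith [Breal_pos hq i' j' n]
                    _ ≤ ∑ m ∈ Nz, (suppCard n q (res n q f m) : ℝ) := by
                        have := Finset.card_nsmul_le_sum Nz
                          (fun m => (suppCard n q (res n q f m):ℝ)) B₂ hIHm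
                        rwa [nsmul_eq_mul] at this
                    _ ≤ ∑ m : Fin q, (suppCard n q (res n q f m) : ℝ) := by
                        apply Finset.sum_le_sum_of_subset_of_nonneg (Finset.subset_univ Nz)
                        intro m _ _
                        positivity
                refine le_trans ?_ hsum
                rw [Breal_step2 hq, hB₂, Breal_step1 hq i' j' n]
                have hβpos : 0 < Breal q i' (j'+1) n := Breal_pos hq i' (j'+1) n
                nlinarith
              · -- exactly one nonzero restriction
                have hN1 : Nz.card = 1 := by
                  have := Finset.card_pos.mpr hNzne
                  omega
                obtain ⟨m₀, hm₀⟩ := Finset.card_eq_one.mp hN1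
                have hm₀ne : res n q f m₀ ≠ 0 := by
                  have : m₀ ∈ Nz := hm₀ ▸ Finset.mem_singleton_self m₀
                  exact (Finset.mem_filter.mp this).2
                have hother : ∀ k, k ≠ m₀ → res n q f k = 0 := by
                  intro k hk
                  by_contra hkne
                  have : k ∈ Nz := Finset.mem_filter.mpr ⟨Finset.mem_univ _, hkne⟩
                  rw [hm₀] at this
                  exact hk (Finset.mem_singleton.mp this)
                have hSs : Ssum n q f = res n q f m₀ := by
                  funext y
                  unfold Ssum
                  rw [Finset.sum_eq_single m₀]
                  · intro m _ hm
                    rw [hother m hm]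
                    rfl
                  · intro hcon
                    exact absurd (Finset.mem_univ m₀) hcon
                have h1 : memUI n q (i'+1) (j'+1) (res n q f m₀) := hSs ▸ memUI_S hmem
                have h2 : memUI n q i' j' (res n q f m₀) := hmemD m₀
                rcases memUI_inter hq0 h1 h2 (by omega) with ⟨-, hcon⟩ | ⟨hlt, h3⟩
                · exact absurd hcon hm₀ne
                · have hIH3 := IH (i'+1) j' (res n q f m₀) (by omega) hm₀ne h3
                  have hstep : Breal q (i'+1) j' n = Breal q (i'+1) (j'+1) (n+1) :=
                    Breal_step3 hq (i'+1) j' n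
                  rw [← hstep]
                  refine le_trans hIH3 ?_
                  have : suppCard n q (res n q f m₀) ≤ suppCard (n+1) q f := by
                    rw [suppCard_cons]
                    exact Finset.single_le_sum
                      (f := fun k => suppCard n q (res n q f k))
                      (fun k _ => Nat.zero_le _) (Finset.mem_univ m₀)
                  exact_mod_cast this

end MinSupp

/-- a nonzero f ∈ U_{[i,j]}(n,q), q ≥ 3, i ≤ j ≤ n, n ≥ i+j, has support
of cardinality at least 2^i (q-1)^i q^{n-i-j}. -/
theorem min_support_Uij_low (n q i j : ℕ) (hq : 3 ≤ q) (hij : i ≤ j) (hjn : j ≤ n)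
    (hn : i + j ≤ n)
    (f : (Fin n → Fin q) → ℝ) (hf : f ≠ 0) (hmem : memUI n q i j f) :
    2 ^ i * (q - 1) ^ i * q ^ (n - i - j) ≤ suppCard n q f := by
  have h := MinSupp.main_bound hq n i j f hij hf hmem
  have hq1 : 1 ≤ q := by omega
  have hqR : (0:ℝ) < (q:ℝ) := by
    have : (3:ℝ) ≤ (q:ℝ) := by exact_mod_cast hq
    linarith
  have hB : MinSupp.Breal q i j n = ((2^i * (q-1)^i * q^(n-i-j) : ℕ) : ℝ) := by
    unfold MinSupp.Breal
    have hsplit : (q:ℝ)^n = (q:ℝ)^(i+j) * (q:ℝ)^(n-i-j) := by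
      rw [← pow_add]
      congr 1
      omega
    rw [hsplit]
    have hpow : ((q:ℝ))^(i+j) ≠ 0 := by positivity
    push_cast [Nat.cast_sub hq1]
    field_simp
  rw [hB] at h
  exact_mod_cast h
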